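/- A circular arc in ℂ subtending an angle of at most π, equipped with the Euclidean (chordal) metric, admits continuous transport: for fully supported diffuse Borel probability measures μ, ν on the arc there is a homeomorphism h of the arc fixing its endpoints with h_*ν = μ and sup_x |h(x) − x| ≤ δ(μ,ν). -/

import Mathlib

open MeasureTheory

/-- The optimal matching distance between two Borel measures. -/
noncomputable def matchDist {X : Type*} [PseudoMetricSpace X] [MeasurableSpace X]
    (μ ν : Measure X) : ℝ :=
  sInf {r : ℝ | ∀ U : Set X, MeasurableSet U →
    μ U ≤ ν (Metric.thickening r U) ∧ ν U ≤ μ (Metric.thickening r U)}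

/-- The circular arc `{e^{it} : t ∈ [0,θ]}` in `ℂ`. -/
def arc (θ : ℝ) : Set ℂ := (fun t : ℝ => Complex.exp (t * Complex.I)) '' Set.Icc 0 θ

namespace Stmt7Aux

open Set Filter Topology ProbabilityTheory Function

/-! ### Chord geometry -/

lemma auxfac (A B : ℝ) : Complex.exp ((A:ℂ)*Complex.I + (B:ℂ)*Complex.I)
    - Complex.exp ((A:ℂ)*Complex.I + ((-B:ℝ):ℂ)*Complex.I)
    = Complex.exp ((A:ℂ)*Complex.I) * (2 * Real.sin B * Complex.I) := by
  rw [Complex.exp_add, Complex.exp_add, Complex.exp_mul_I ((-B:ℝ):ℂ), Complex.exp_mul_I (B:ℂ)]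
  rw [Complex.ofReal_neg, Complex.cos_neg, Complex.sin_neg, Complex.ofReal_sin]; ring

lemma chord (s t : ℝ) : ‖Complex.exp (s*Complex.I) - Complex.exp (t*Complex.I)‖
    = 2*|Real.sin ((s-t)/2)| := by
  have h1 : (s:ℂ)*Complex.I = (((s+t)/2:ℝ):ℂ)*Complex.I + (((s-t)/2:ℝ):ℂ)*Complex.I := by
    push_cast; ring
  have h2 : (t:ℂ)*Complex.I = (((s+t)/2:ℝ):ℂ)*Complex.I + ((-((s-t)/2):ℝ):ℂ)*Complex.I := by
    push_cast; ring
  rw [h1, h2, auxfac, norm_mul, Complex.norm_exp_ofReal_mul_I, one_mul, norm_mul, norm_mul,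
    Complex.norm_I, Complex.norm_real, Real.norm_eq_abs, Complex.norm_two, mul_one]

lemma einj {θ s t : ℝ} (hθ : θ ≤ Real.pi) (hs : s ∈ Set.Icc 0 θ) (ht : t ∈ Set.Icc 0 θ)
    (h : Complex.exp (s*Complex.I) = Complex.exp (t*Complex.I)) : s = t := by
  rw [Complex.exp_eq_exp_iff_exists_int] at h
  obtain ⟨n, hn⟩ := h
  have h2 : (s:ℂ)*Complex.I = ((t:ℂ) + n*(2*Real.pi))*Complex.I := by rw [hn]; ring
  have h3 := mul_right_cancel₀ Complex.I_ne_zero h2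
  have hr : s = t + n * (2*Real.pi) := by exact_mod_cast h3
  have hpi : 0 < Real.pi := Real.pi_pos
  have hn0 : n = 0 := by
    rcases lt_trichotomy n 0 with h | h | h
    · have : (n:ℝ) ≤ -1 := by exact_mod_cast (by omega : n ≤ -1)
      nlinarith [hs.1, hs.2, ht.1, ht.2]
    · exact h
    · have : (1:ℝ) ≤ n := by exact_mod_cast h
      nlinarith [hs.1, hs.2, ht.1, ht.2]
  rw [hn0] at hr; push_cast at hr; linarith

/-- monotonicity of the chord length function on `[0, π]`. -/
lemma chordFn_mono {x y : ℝ} (hx : 0 ≤ x) (hxy : x ≤ y) (hy : y ≤ Real.pi) :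
    2 * Real.sin (x/2) ≤ 2 * Real.sin (y/2) := by
  have := Real.strictMonoOn_sin.monotoneOn (a := x/2) (b := y/2)
    (by constructor <;> [linarith [Real.pi_pos]; linarith]) 
    (by constructor <;> [linarith [Real.pi_pos]; linarith]) (by linarith)
  linarith

lemma chordFn_lt {x y : ℝ} (hx : 0 ≤ x) (hxy : x < y) (hy : y ≤ Real.pi)
    (h : 2 * Real.sin (y/2) ≤ 2 * Real.sin (x/2)) : False := by
  have := Real.strictMonoOn_sin (a := x/2) (b := y/2)
    (by constructor <;> [linarith [Real.pi_pos]; linarith])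
    (by constructor <;> [linarith [Real.pi_pos]; linarith]) (by linarith)
  linarith

/-! ### The parametrization -/

variable {θ : ℝ}

noncomputable def pmap (θ : ℝ) (t : Icc (0:ℝ) θ) : arc θ :=
  ⟨Complex.exp ((t:ℝ) * Complex.I), ⟨t, t.2, rfl⟩⟩

lemma continuous_pmap : Continuous (pmap θ) :=
  Continuous.subtype_mk (Complex.continuous_exp.comp
    ((Complex.continuous_ofReal.comp continuous_subtype_val).mul continuous_const)) _

lemma bij_pmap (hθpi : θ ≤ Real.pi) : Function.Bijective (pmap θ) := by
  constructor
  · intro s t hst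
    exact Subtype.ext (einj hθpi s.2 t.2 (congrArg Subtype.val hst))
  · rintro ⟨x, t, ht, rfl⟩
    exact ⟨⟨t, ht⟩, rfl⟩

noncomputable def P (hθpi : θ ≤ Real.pi) : Icc (0:ℝ) θ ≃ₜ arc θ :=
  Continuous.homeoOfEquivCompactToT2 (f := Equiv.ofBijective _ (bij_pmap hθpi)) continuous_pmap

lemma P_apply (hθpi : θ ≤ Real.pi) (t : Icc (0:ℝ) θ) : P hθpi t = pmap θ t := rfl

noncomputable def q (hθpi : θ ≤ Real.pi) (x : arc θ) : ℝ := ((P hθpi).symm x : ℝ)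

lemma q_eq (hθpi : θ ≤ Real.pi) : q hθpi = Subtype.val ∘ ⇑(P hθpi).symm := rfl

lemma continuous_q (hθpi : θ ≤ Real.pi) : Continuous (q hθpi) :=
  continuous_subtype_val.comp (P hθpi).symm.continuous

lemma measurable_q (hθpi : θ ≤ Real.pi) : Measurable (q hθpi) :=
  (continuous_q hθpi).measurable

lemma q_mem (hθpi : θ ≤ Real.pi) (x : arc θ) : q hθpi x ∈ Icc (0:ℝ) θ := ((P hθpi).symm x).2

lemma q_pmap (hθpi : θ ≤ Real.pi) (t : Icc (0:ℝ) θ) : q hθpi (pmap θ t) = t := by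
  unfold q
  rw [← P_apply hθpi, Homeomorph.symm_apply_apply]

lemma val_eq_exp (hθpi : θ ≤ Real.pi) (x : arc θ) :
    (x : ℂ) = Complex.exp ((q hθpi x) * Complex.I) := by
  conv_lhs => rw [← (P hθpi).apply_symm_apply x]
  rfl

lemma dist_eq_chord (hθpi : θ ≤ Real.pi) (x y : arc θ) :
    dist x y = 2*|Real.sin ((q hθpi x - q hθpi y)/2)| := by
  rw [Subtype.dist_eq, Complex.dist_eq, val_eq_exp hθpi x, val_eq_exp hθpi y, chord]

lemma arc_measurableSet : MeasurableSet (arc θ) :=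
  ((isCompact_Icc.image (Complex.continuous_exp.comp
    (Complex.continuous_ofReal.mul continuous_const)))).isClosed.measurableSet

/-! ### measure transfer -/

lemma prob_map (hθpi : θ ≤ Real.pi) (α : Measure (arc θ)) [IsProbabilityMeasure α] :
    IsProbabilityMeasure (Measure.map (q hθpi) α) :=
  Measure.isProbabilityMeasure_map (measurable_q hθpi).aemeasurable

lemma noAtoms_map (hθpi : θ ≤ Real.pi) (α : Measure (arc θ))
    (hdiff : ∀ x : arc θ, α {x} = 0) : NullSingletonClass (Measure.map (q hθpi) α) := by
  constructor
  intro a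
  rw [Measure.map_apply (measurable_q hθpi) (measurableSet_singleton a)]
  by_cases h : ∃ x : arc θ, q hθpi x = a
  · obtain ⟨x, rfl⟩ := h
    have hsub : q hθpi ⁻¹' {q hθpi x} ⊆ {x} := by
      intro y hy
      simp only [mem_preimage, mem_singleton_iff] at hy ⊢
      have h2 : (P hθpi).symm y = (P hθpi).symm x := Subtype.ext hy
      simpa using congrArg (P hθpi) h2
    exact le_antisymm ((measure_mono hsub).trans (hdiff x).le) (zero_le)
  · have hsub : q hθpi ⁻¹' {a} = ∅ := by
      ext y; simp only [mem_preimage, mem_singleton_iff, mem_empty_iff_false, iff_false]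
      exact fun hy => h ⟨y, hy⟩
    simp [hsub]

lemma map_compl_zero (hθpi : θ ≤ Real.pi) (α : Measure (arc θ)) :
    Measure.map (q hθpi) α (Icc (0:ℝ) θ)ᶜ = 0 := by
  rw [Measure.map_apply (measurable_q hθpi) measurableSet_Icc.compl]
  have hsub : q hθpi ⁻¹' (Icc (0:ℝ) θ)ᶜ = ∅ := by
    ext y; simp [q_mem hθpi y]
  simp [hsub]

lemma cont_cdf (m : Measure ℝ) [IsProbabilityMeasure m] [NullSingletonClass m] :
    Continuous (cdf m) := by
  rw [continuous_iff_continuousAt]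
  intro x
  rw [(cdf m).mono.continuousAt_iff_leftLim_eq_rightLim]
  have h2 : rightLim (cdf m) x = cdf m x := by
    refine rightLim_eq_of_tendsto ?_
    exact ((cdf m).right_continuous x).tendsto.mono_left (nhdsWithin_mono _ Ioi_subset_Ici_self)
  have h1 : leftLim (cdf m) x = cdf m x := by
    have hs := (cdf m).measure_singleton x
    rw [measure_cdf, measure_singleton] at hs
    have hle : leftLim (cdf m) x ≤ cdf m x := (cdf m).mono.leftLim_le le_rfl
    have h0 : cdf m x - leftLim (cdf m) x ≤ 0 := ENNReal.ofReal_eq_zero.mp hs.symm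
    linarith
  rw [h1, h2]

lemma measure_Iic_eq (m : Measure ℝ) [IsProbabilityMeasure m] (x : ℝ) :
    m (Iic x) = ENNReal.ofReal (cdf m x) := (ofReal_cdf m x).symm

lemma cdf_smo (hθpi : θ ≤ Real.pi) (α : Measure (arc θ)) [IsProbabilityMeasure α]
    (hfull : ∀ U : Set (arc θ), IsOpen U → U.Nonempty → 0 < α U) :
    StrictMonoOn (cdf (Measure.map (q hθpi) α)) (Icc (0:ℝ) θ) := by
  intro s hs t ht hst
  haveI := prob_map hθpi α
  set m := Measure.map (q hθpi) α with hm
  have hopen : IsOpen (q hθpi ⁻¹' Ioo s t) := isOpen_Ioo.preimage (continuous_q hθpi)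
  have hne : (q hθpi ⁻¹' Ioo s t).Nonempty := by
    obtain ⟨x, hx1, hx2⟩ := exists_between hst
    exact ⟨pmap θ ⟨x, ⟨hs.1.trans hx1.le, hx2.le.trans ht.2⟩⟩,
      by simp [mem_preimage, q_pmap hθpi, Set.mem_Ioo, hx1, hx2]⟩
  have hpos : 0 < m (Ioo s t) := by
    rw [hm, Measure.map_apply (measurable_q hθpi) measurableSet_Ioo]
    exact hfull _ hopen hne
  have hpos2 : 0 < m (Ioc s t) := lt_of_lt_of_le hpos (measure_mono Ioo_subset_Ioc_self)
  have hIoc : m (Ioc s t) = ENNReal.ofReal (cdf m t - cdf m s) := by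
    conv_lhs => rw [← measure_cdf m]
    exact (cdf m).measure_Ioc s t
  rw [hIoc, ENNReal.ofReal_pos] at hpos2
  linarith

lemma cdf_zero (hθpi : θ ≤ Real.pi) (α : Measure (arc θ)) [IsProbabilityMeasure α]
    (hdiff : ∀ x : arc θ, α {x} = 0) :
    cdf (Measure.map (q hθpi) α) 0 = 0 := by
  haveI := prob_map hθpi α
  haveI := noAtoms_map hθpi α hdiff
  set m := Measure.map (q hθpi) α with hm
  have h0 : m (Iic 0) = 0 := by
    have h1 : m (Iio 0) = 0 := by
      refine le_antisymm (le_trans (measure_mono ?_) (map_compl_zero hθpi α).le) (zero_le)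
      intro y hy
      simp only [mem_Iio] at hy
      simp only [mem_compl_iff, mem_Icc, not_and_or, not_le]
      exact Or.inl hy
    have : m (Iic 0) ≤ m (Iio 0) + m {0} := by
      rw [← Iio_union_right (a := (0:ℝ))]
      exact measure_union_le _ _
    simpa [measure_singleton, h1] using this
  rw [cdf_eq_real, measureReal_def, h0]; simp

lemma measure_Iic_one (hθpi : θ ≤ Real.pi) (α : Measure (arc θ)) [IsProbabilityMeasure α]
    {x : ℝ} (hx : θ ≤ x) : Measure.map (q hθpi) α (Iic x) = 1 := by
  haveI := prob_map hθpi α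
  set m := Measure.map (q hθpi) α with hm
  have h1 : m (Ioi x) = 0 := by
    refine le_antisymm (le_trans (measure_mono ?_) (map_compl_zero hθpi α).le) (zero_le)
    intro y hy
    simp only [mem_Ioi] at hy
    simp only [mem_compl_iff, mem_Icc, not_and_or, not_le]
    exact Or.inr (lt_of_le_of_lt hx hy)
  have huniv := measure_univ (μ := m)
  have : m univ ≤ m (Iic x) + m (Ioi x) := by
    rw [← Iic_union_Ioi (a := x)]
    exact measure_union_le _ _
  rw [huniv, h1, add_zero] at this
  exact le_antisymm prob_le_one this

lemma cdf_theta (hθpi : θ ≤ Real.pi) (α : Measure (arc θ)) [IsProbabilityMeasure α] :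
    cdf (Measure.map (q hθpi) α) θ = 1 := by
  haveI := prob_map hθpi α
  rw [cdf_eq_real, measureReal_def, measure_Iic_one hθpi α le_rfl]; simp

lemma cdf_image (hθ0 : 0 ≤ θ) (hθpi : θ ≤ Real.pi) (α : Measure (arc θ))
    [IsProbabilityMeasure α] (hdiff : ∀ x : arc θ, α {x} = 0) :
    cdf (Measure.map (q hθpi) α) '' Icc (0:ℝ) θ = Icc (0:ℝ) 1 := by
  haveI := prob_map hθpi α
  haveI := noAtoms_map hθpi α hdiff
  apply subset_antisymm
  · rintro y ⟨x, hx, rfl⟩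
    constructor
    · rw [← cdf_zero hθpi α hdiff]; exact monotone_cdf _ hx.1
    · rw [← cdf_theta hθpi α]; exact monotone_cdf _ hx.2
  · have := intermediate_value_Icc hθ0 (cont_cdf (Measure.map (q hθpi) α)).continuousOn
    rwa [cdf_zero hθpi α hdiff, cdf_theta hθpi α] at this

noncomputable def eIso (F : ℝ → ℝ) (hsm : StrictMonoOn F (Icc (0:ℝ) θ))
    (himg : F '' Icc (0:ℝ) θ = Icc (0:ℝ) 1) : Icc (0:ℝ) θ ≃o Icc (0:ℝ) 1 :=
  (hsm.orderIso F _).trans (OrderIso.setCongr _ _ himg)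

lemma eIso_apply (F : ℝ → ℝ) (hsm : StrictMonoOn F (Icc (0:ℝ) θ))
    (himg : F '' Icc (0:ℝ) θ = Icc (0:ℝ) 1) (t : Icc (0:ℝ) θ) :
    ((eIso F hsm himg t : Icc (0:ℝ) 1) : ℝ) = F t := rfl

lemma map_inj {X Y : Type*} [MeasurableSpace X] [MeasurableSpace Y] {f : X → Y}
    (hf : MeasurableEmbedding f) {α β : Measure X}
    (h : Measure.map f α = Measure.map f β) : α = β := by
  ext S hS
  have h2 := congrArg (fun ρ : Measure Y => ρ (f '' S)) h
  simpa [hf.map_apply, hf.injective.preimage_image] using h2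

/-! ### The key transport estimate -/

lemma key (hθ0 : 0 < θ) (hθpi : θ ≤ Real.pi)
    (α β : Measure (arc θ)) [IsProbabilityMeasure α] [IsProbabilityMeasure β]
    (hsm : StrictMonoOn (cdf (Measure.map (q hθpi) α)) (Icc (0:ℝ) θ))
    (K : Icc (0:ℝ) θ ≃o Icc (0:ℝ) θ)
    (hK : ∀ s : Icc (0:ℝ) θ, cdf (Measure.map (q hθpi) α) (K s : ℝ)
        = cdf (Measure.map (q hθpi) β) (s : ℝ))
    (r : ℝ) (hr0 : 0 < r)
    (hadm : ∀ U : Set (arc θ), MeasurableSet U → β U ≤ α (Metric.thickening r U))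
    (t : Icc (0:ℝ) θ) (hlt : (t:ℝ) < (K t : ℝ)) :
    2 * Real.sin (((K t : ℝ) - (t:ℝ))/2) ≤ r := by
  haveI := prob_map hθpi α
  haveI := prob_map hθpi β
  set mα := Measure.map (q hθpi) α with hmα
  set mβ := Measure.map (q hθpi) β with hmβ
  by_contra hcon
  push_neg at hcon
  set a : ℝ := (K t : ℝ) - (t:ℝ) with ha
  have ha0 : 0 < a := sub_pos.mpr hlt
  have hapi : a ≤ Real.pi := by
    have h1 : (K t : ℝ) ≤ θ := (K t).2.2
    have h2 : (0:ℝ) ≤ (t:ℝ) := t.2.1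
    simp only [ha]; linarith
  -- find c with 2 sin(c/2) = r, 0 < c < a
  have hivt : r ∈ (fun x => 2 * Real.sin (x/2)) '' Ioo 0 a := by
    apply intermediate_value_Ioo ha0.le
      (Continuous.continuousOn (by continuity))
    constructor
    · simpa using hr0
    · simpa using hcon
  obtain ⟨c, hc, hcr⟩ := hivt
  -- the test set
  set U : Set (arc θ) := q hθpi ⁻¹' (Iic (t:ℝ)) with hU
  have hUmeas : MeasurableSet U := (measurable_q hθpi) measurableSet_Iic
  have hβU : β U = ENNReal.ofReal (cdf mβ (t:ℝ)) := by
    rw [hU, ← Measure.map_apply (measurable_q hθpi) measurableSet_Iic, ← hmβ,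
      measure_Iic_eq]
  -- thickening estimate
  have hthick : Metric.thickening r U ⊆ q hθpi ⁻¹' (Iic ((t:ℝ) + c)) := by
    intro x hx
    rw [Metric.mem_thickening_iff] at hx
    obtain ⟨y, hyU, hxy⟩ := hx
    have hyle : q hθpi y ≤ (t:ℝ) := hyU
    simp only [mem_preimage, mem_Iic]
    by_cases hord : q hθpi x ≤ q hθpi y
    · linarith [hc.1]
    · push_neg at hord
      have hd := dist_eq_chord hθpi x y
      have hnn : 0 ≤ q hθpi x - q hθpi y := by linarith
      have hpi2 : q hθpi x - q hθpi y ≤ Real.pi := by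
        have := (q_mem hθpi x).2
        have := (q_mem hθpi y).1
        linarith
      rw [hd, abs_of_nonneg (Real.sin_nonneg_of_nonneg_of_le_pi (by linarith) (by linarith))] at hxy
      have hcr' : 2 * Real.sin (c/2) = r := hcr
      have hlt2 : q hθpi x - q hθpi y < c := by
        by_contra hge
        push_neg at hge
        have := chordFn_mono hc.1.le hge hpi2
        linarith
      linarith
  have hαthick : α (Metric.thickening r U) ≤ ENNReal.ofReal (cdf mα ((t:ℝ) + c)) := by
    calc α (Metric.thickening r U) ≤ α (q hθpi ⁻¹' (Iic ((t:ℝ)+c))) := measure_mono hthick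
    _ = mα (Iic ((t:ℝ)+c)) := (Measure.map_apply (measurable_q hθpi) measurableSet_Iic).symm
    _ = ENNReal.ofReal (cdf mα ((t:ℝ)+c)) := measure_Iic_eq _ _
  have hmem1 : (t:ℝ) + c ∈ Icc (0:ℝ) θ :=
    ⟨by linarith [t.2.1, hc.1.le], by linarith [(K t).2.2, hc.2]⟩
  have hstrict : cdf mα ((t:ℝ)+c) < cdf mα (K t : ℝ) :=
    hsm hmem1 (K t).2 (by linarith [hc.2])
  have hchain : β U ≤ ENNReal.ofReal (cdf mα ((t:ℝ)+c)) := (hadm U hUmeas).trans hαthick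
  rw [hβU, ← hK t] at hchain
  have hfin : cdf mα (K t : ℝ) ≤ cdf mα ((t:ℝ)+c) :=
    (ENNReal.ofReal_le_ofReal_iff (cdf_nonneg _ _)).mp hchain
  linarith

end Stmt7Aux

open Stmt7Aux Set ProbabilityTheory

lemma arc_norm {θ : ℝ} (z : arc θ) : ‖(z : ℂ)‖ = 1 := by
  obtain ⟨w, t, ht, rfl⟩ := z
  exact Complex.norm_exp_ofReal_mul_I t

/-- A circular arc subtending an angle at most `π`, with the Euclidean (chordal)
metric, admits continuous transport: for fully supported diffuse Borel probability
measures `μ, ν` on the arc there is a homeomorphism of the arc fixing its endpoints,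
pushing `ν` to `μ` and moving points at most `δ(μ,ν)`. -/
theorem stmt7 (θ : ℝ) (hθ : θ ∈ Set.Icc 0 Real.pi)
    (μ ν : Measure (arc θ)) [IsProbabilityMeasure μ] [IsProbabilityMeasure ν]
    (hdiffμ : ∀ x : arc θ, μ {x} = 0) (hdiffν : ∀ x : arc θ, ν {x} = 0)
    (hfullμ : ∀ U : Set (arc θ), IsOpen U → U.Nonempty → 0 < μ U)
    (hfullν : ∀ U : Set (arc θ), IsOpen U → U.Nonempty → 0 < ν U) :
    ∃ h : arc θ ≃ₜ arc θ,
      h ⟨Complex.exp ((0 : ℝ) * Complex.I), ⟨0, ⟨le_refl 0, hθ.1⟩, rfl⟩⟩ =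
        ⟨Complex.exp ((0 : ℝ) * Complex.I), ⟨0, ⟨le_refl 0, hθ.1⟩, rfl⟩⟩ ∧
      h ⟨Complex.exp (θ * Complex.I), ⟨θ, ⟨hθ.1, le_refl θ⟩, rfl⟩⟩ =
        ⟨Complex.exp (θ * Complex.I), ⟨θ, ⟨hθ.1, le_refl θ⟩, rfl⟩⟩ ∧
      Measure.map h ν = μ ∧
      ∀ x : arc θ, dist (h x) x ≤ matchDist μ ν := by
  classical
  rcases eq_or_lt_of_le hθ.1 with h0 | hpos
  · -- θ = 0 : contradiction with diffuseness
    exfalso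
    set x0 : arc θ := ⟨Complex.exp ((0:ℝ)*Complex.I), ⟨0, ⟨le_refl 0, hθ.1⟩, rfl⟩⟩ with hx0
    have huniv : (Set.univ : Set (arc θ)) = {x0} := by
      ext y
      simp only [Set.mem_univ, Set.mem_singleton_iff, true_iff]
      obtain ⟨w, t, ht, hv⟩ := y
      have ht0 : t = 0 := le_antisymm (h0 ▸ ht.2) ht.1
      apply Subtype.ext
      simp only [hx0]
      rw [← hv, ht0]
    have h1 := measure_univ (μ := μ)
    rw [huniv, hdiffμ x0] at h1
    exact zero_ne_one h1
  have hθpi : θ ≤ Real.pi := hθ.2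
  haveI hm : IsProbabilityMeasure (Measure.map (q hθpi) μ) := prob_map hθpi μ
  haveI hn : IsProbabilityMeasure (Measure.map (q hθpi) ν) := prob_map hθpi ν
  haveI := noAtoms_map hθpi μ hdiffμ
  haveI := noAtoms_map hθpi ν hdiffν
  have hsmμ := cdf_smo hθpi μ hfullμ
  have hsmν := cdf_smo hθpi ν hfullν
  have himgμ := cdf_image hθ.1 hθpi μ hdiffμ
  have himgν := cdf_image hθ.1 hθpi ν hdiffν
  set eμ : Icc (0:ℝ) θ ≃o Icc (0:ℝ) 1 := eIso _ hsmμ himgμ with heμ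
  set eν : Icc (0:ℝ) θ ≃o Icc (0:ℝ) 1 := eIso _ hsmν himgν with heν
  set E : Icc (0:ℝ) θ ≃o Icc (0:ℝ) θ := eν.trans eμ.symm with hE
  set HI : Icc (0:ℝ) θ ≃ₜ Icc (0:ℝ) θ := E.toHomeomorph with hHI
  set hh : arc θ ≃ₜ arc θ := ((P hθpi).symm.trans HI).trans (P hθpi) with hhh
  have heμ_val : ∀ s : Icc (0:ℝ) θ, ((eμ s : Icc (0:ℝ) 1) : ℝ) = cdf (Measure.map (q hθpi) μ) s :=
    fun s => rfl
  have heν_val : ∀ s : Icc (0:ℝ) θ, ((eν s : Icc (0:ℝ) 1) : ℝ) = cdf (Measure.map (q hθpi) ν) s :=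
    fun s => rfl
  have hrel : ∀ s : Icc (0:ℝ) θ,
      cdf (Measure.map (q hθpi) μ) ((E s : Icc (0:ℝ) θ) : ℝ)
      = cdf (Measure.map (q hθpi) ν) ((s : Icc (0:ℝ) θ) : ℝ) := by
    intro s
    have h1 : E s = eμ.symm (eν s) := rfl
    rw [h1, ← heμ_val (eμ.symm (eν s)), OrderIso.apply_symm_apply, heν_val]
  have hhx : ∀ x : arc θ, hh x = P hθpi (E ((P hθpi).symm x)) := fun x => rfl
  have hqhh : ∀ x : arc θ, q hθpi (hh x) = ((E ((P hθpi).symm x) : Icc (0:ℝ) θ) : ℝ) := by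
    intro x
    rw [hhx x]
    show ((P hθpi).symm (P hθpi _) : ℝ) = _
    rw [Homeomorph.symm_apply_apply]
  -- E fixes the endpoints
  have hE0 : E ⟨0, le_refl 0, hθ.1⟩ = ⟨0, le_refl 0, hθ.1⟩ := by
    have h1 : eν ⟨0, le_refl 0, hθ.1⟩ = ⟨0, le_refl 0, zero_le_one⟩ := by
      apply Subtype.ext
      rw [heν_val]
      exact cdf_zero hθpi ν hdiffν
    have h2 : eμ ⟨0, le_refl 0, hθ.1⟩ = ⟨0, le_refl 0, zero_le_one⟩ := by
      apply Subtype.ext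
      rw [heμ_val]
      exact cdf_zero hθpi μ hdiffμ
    show eμ.symm (eν _) = _
    rw [h1, ← h2, OrderIso.symm_apply_apply]
  have hEθ : E ⟨θ, hθ.1, le_refl θ⟩ = ⟨θ, hθ.1, le_refl θ⟩ := by
    have h1 : eν ⟨θ, hθ.1, le_refl θ⟩ = ⟨1, zero_le_one, le_refl 1⟩ := by
      apply Subtype.ext
      rw [heν_val]
      exact cdf_theta hθpi ν
    have h2 : eμ ⟨θ, hθ.1, le_refl θ⟩ = ⟨1, zero_le_one, le_refl 1⟩ := by
      apply Subtype.ext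
      rw [heμ_val]
      exact cdf_theta hθpi μ
    show eμ.symm (eν _) = _
    rw [h1, ← h2, OrderIso.symm_apply_apply]
  have hPend : ∀ (t : ℝ) (ht : t ∈ Icc (0:ℝ) θ) (hmem : Complex.exp (t*Complex.I) ∈ arc θ),
      P hθpi ⟨t, ht⟩ = ⟨Complex.exp (t*Complex.I), hmem⟩ := by
    intro t ht hmem
    apply Subtype.ext
    rfl
  refine ⟨hh, ?_, ?_, ?_, ?_⟩
  · -- endpoint 0
    rw [hhx]
    have hs : (P hθpi).symm ⟨Complex.exp ((0:ℝ)*Complex.I), ⟨0, ⟨le_refl 0, hθ.1⟩, rfl⟩⟩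
        = ⟨0, le_refl 0, hθ.1⟩ := by
      have h1 := hPend 0 ⟨le_refl 0, hθ.1⟩ ⟨0, ⟨le_refl 0, hθ.1⟩, rfl⟩
      rw [← h1, Homeomorph.symm_apply_apply]
    rw [hs, hE0]
    exact hPend 0 ⟨le_refl 0, hθ.1⟩ _
  · -- endpoint θ
    rw [hhx]
    have hs : (P hθpi).symm ⟨Complex.exp (θ*Complex.I), ⟨θ, ⟨hθ.1, le_refl θ⟩, rfl⟩⟩
        = ⟨θ, hθ.1, le_refl θ⟩ := by
      have h1 := hPend θ ⟨hθ.1, le_refl θ⟩ ⟨θ, ⟨hθ.1, le_refl θ⟩, rfl⟩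
      rw [← h1, Homeomorph.symm_apply_apply]
    rw [hs, hEθ]
    exact hPend θ ⟨hθ.1, le_refl θ⟩ _
  · -- pushforward
    have hqemb : MeasurableEmbedding (q hθpi) := by
      have h1 : MeasurableEmbedding (Subtype.val : Icc (0:ℝ) θ → ℝ) :=
        MeasurableEmbedding.subtype_coe measurableSet_Icc
      have h2 : MeasurableEmbedding (⇑(P hθpi).symm) := (P hθpi).symm.measurableEmbedding
      rw [q_eq]
      exact h1.comp h2
    apply map_inj hqemb
    have hhmeas : Measurable ⇑hh := hh.continuous.measurable
    rw [Measure.map_map hqemb.measurable hhmeas]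
    haveI : IsProbabilityMeasure (Measure.map (q hθpi ∘ ⇑hh) ν) :=
      Measure.isProbabilityMeasure_map ((hqemb.measurable.comp hhmeas).aemeasurable)
    refine Measure.ext_of_Iic _ _ (fun x => ?_)
    rw [Measure.map_apply (hqemb.measurable.comp hhmeas) measurableSet_Iic,
      Measure.map_apply (measurable_q hθpi) measurableSet_Iic]
    by_cases hx0 : x < 0
    · have h1 : (q hθpi ∘ ⇑hh) ⁻¹' Iic x = ∅ := by
        ext y
        simp only [mem_preimage, Function.comp_apply, mem_Iic, mem_empty_iff_false, iff_false,
          not_le]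
        exact lt_of_lt_of_le hx0 (q_mem hθpi (hh y)).1
      have h2 : q hθpi ⁻¹' Iic x = ∅ := by
        ext y
        simp only [mem_preimage, mem_Iic, mem_empty_iff_false, iff_false, not_le]
        exact lt_of_lt_of_le hx0 (q_mem hθpi y).1
      rw [h1, h2]
      simp
    push_neg at hx0
    by_cases hxθ : x ≤ θ
    · -- middle case
      set y0 : ℝ := ((E.symm ⟨x, hx0, hxθ⟩ : Icc (0:ℝ) θ) : ℝ) with hy0
      have hpre : (q hθpi ∘ ⇑hh) ⁻¹' Iic x = q hθpi ⁻¹' Iic y0 := by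
        ext y
        simp only [mem_preimage, Function.comp_apply, mem_Iic]
        rw [hqhh y]
        have hq : q hθpi y = (((P hθpi).symm y : Icc (0:ℝ) θ) : ℝ) := rfl
        rw [hq, hy0]
        constructor
        · intro hle
          exact Subtype.coe_le_coe.mpr (E.le_symm_apply.mpr (Subtype.coe_le_coe.mp hle))
        · intro hle
          exact Subtype.coe_le_coe.mpr (E.le_symm_apply.mp (Subtype.coe_le_coe.mp hle))
      rw [hpre, ← Measure.map_apply (measurable_q hθpi) measurableSet_Iic,
        ← Measure.map_apply (measurable_q hθpi) measurableSet_Iic,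
        measure_Iic_eq, measure_Iic_eq]
      congr 1
      have := hrel (E.symm ⟨x, hx0, hxθ⟩)
      rw [OrderIso.apply_symm_apply] at this
      exact this.symm
    · push_neg at hxθ
      have h1 : (q hθpi ∘ ⇑hh) ⁻¹' Iic x = univ := by
        ext y
        simp only [mem_preimage, Function.comp_apply, mem_Iic, mem_univ, iff_true]
        exact (q_mem hθpi (hh y)).2.trans hxθ.le
      have h2 : q hθpi ⁻¹' Iic x = univ := by
        ext y
        simp only [mem_preimage, mem_Iic, mem_univ, iff_true]
        exact (q_mem hθpi y).2.trans hxθ.le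
      rw [h1, h2, measure_univ, measure_univ]
  · -- distance bound
    intro x
    have h3mem : (3:ℝ) ∈ {r : ℝ | ∀ U : Set (arc θ), MeasurableSet U →
        μ U ≤ ν (Metric.thickening r U) ∧ ν U ≤ μ (Metric.thickening r U)} := by
      intro U hU
      rcases U.eq_empty_or_nonempty with rfl | hne
      · simp [Metric.thickening_empty]
      · have huniv : Metric.thickening 3 U = univ := by
          ext z
          simp only [mem_univ, iff_true]
          obtain ⟨y, hy⟩ := hne
          rw [Metric.mem_thickening_iff]
          refine ⟨y, hy, ?_⟩
          have hd : dist z y ≤ 2 := by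
            rw [Subtype.dist_eq, Complex.dist_eq]
            calc ‖(z:ℂ) - (y:ℂ)‖ ≤ ‖(z:ℂ)‖ + ‖(y:ℂ)‖ :=
              norm_sub_le _ _
            _ = 2 := by rw [arc_norm z, arc_norm y]; norm_num
          linarith
        constructor <;> (rw [huniv, measure_univ]; exact prob_le_one)
    apply le_csInf ⟨3, h3mem⟩
    intro r hr
    have hr0 : 0 < r := by
      by_contra hneg
      push_neg at hneg
      have h1 := (hr univ MeasurableSet.univ).1
      rw [Metric.thickening_of_nonpos hneg, measure_empty, measure_univ] at h1
      exact absurd h1 (by simp)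
    set s : Icc (0:ℝ) θ := (P hθpi).symm x with hs
    have hxs : x = P hθpi s := ((P hθpi).apply_symm_apply x).symm
    have hdh : dist (hh x) x
        = 2*|Real.sin ((((E s : Icc (0:ℝ) θ) : ℝ) - ((s : Icc (0:ℝ) θ) : ℝ))/2)| := by
      rw [dist_eq_chord hθpi, hqhh x]
      rfl
    rw [hdh]
    rcases lt_trichotomy ((s : Icc (0:ℝ) θ) : ℝ) ((E s : Icc (0:ℝ) θ) : ℝ) with hlt | heq | hgt
    · have hkey := key hpos hθpi μ ν hsmμ E hrel r hr0 (fun U hU => (hr U hU).2) s hlt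
      have hnn : (0:ℝ) ≤ (((E s : Icc (0:ℝ) θ) : ℝ) - (s:ℝ))/2 := by linarith
      have hpi : (((E s : Icc (0:ℝ) θ) : ℝ) - (s:ℝ))/2 ≤ Real.pi := by
        have h1 : ((E s : Icc (0:ℝ) θ) : ℝ) ≤ θ := (E s).2.2
        have h2 : (0:ℝ) ≤ (s:ℝ) := s.2.1
        linarith
      rw [abs_of_nonneg (Real.sin_nonneg_of_nonneg_of_le_pi hnn hpi)]
      exact hkey
    · rw [heq]
      simp only [sub_self, zero_div, Real.sin_zero, abs_zero, mul_zero]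
      exact hr0.le
    · have hrel' : ∀ u : Icc (0:ℝ) θ,
          cdf (Measure.map (q hθpi) ν) ((E.symm u : Icc (0:ℝ) θ) : ℝ)
          = cdf (Measure.map (q hθpi) μ) ((u : Icc (0:ℝ) θ) : ℝ) := by
        intro u
        have := hrel (E.symm u)
        rw [OrderIso.apply_symm_apply] at this
        exact this.symm
      have hlt' : ((E s : Icc (0:ℝ) θ) : ℝ) < ((E.symm (E s) : Icc (0:ℝ) θ) : ℝ) := by
        rw [OrderIso.symm_apply_apply]
        exact hgt
      have hkey := key hpos hθpi ν μ hsmν E.symm hrel' r hr0 (fun U hU => (hr U hU).1)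
        (E s) hlt'
      rw [OrderIso.symm_apply_apply] at hkey
      have hnp : (((E s : Icc (0:ℝ) θ) : ℝ) - (s:ℝ))/2 ≤ 0 := by linarith
      have hpi : -Real.pi ≤ (((E s : Icc (0:ℝ) θ) : ℝ) - (s:ℝ))/2 := by
        have h1 : ((E s : Icc (0:ℝ) θ) : ℝ) ≥ 0 := (E s).2.1
        have h2 : (s:ℝ) ≤ θ := s.2.2
        linarith
      rw [abs_of_nonpos (Real.sin_nonpos_of_nonpos_of_neg_pi_le hnp hpi), ← Real.sin_neg]
      have harg : -((((E s : Icc (0:ℝ) θ) : ℝ) - (s:ℝ))/2) = (((s:ℝ) - ((E s : Icc (0:ℝ) θ) : ℝ))/2) := by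
        ring
      rw [harg]
      exact hkey
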